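/- arXiv:2110.15440 — 2 statements merged into one kernel-verified Lean document; each statement's English description precedes it below -/
import Mathlib

section
/- Single-feature unbiasedness: let μ be a probability measure on ℝ^d and K : ℝ^d → ℝ a function such that K(z) = ∫ cos(w·z) dμ(w) for every z ∈ ℝ^d. Let (w, b) be distributed according to the product of μ and the uniform distribution on [0, 2π]. Then for all x, y ∈ ℝ^d, E[2·cos(w·x + b)·cos(w·y + b)] = K(x − y). -/
open Real RealInnerProductSpace MeasureTheory

lemma rff_cos_prod_id (A C b : ℝ) : 2 * Real.cos (A + b) * Real.cos (C + b)
      = Real.cos (A - C) + Real.cos ((A + C) + 2*b) := by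
  simp only [Real.cos_add, Real.cos_sub, Real.sin_add, Real.cos_two_mul, Real.sin_two_mul]
  linear_combination (2 * Real.sin A * Real.sin C) * (Real.sin_sq_add_cos_sq b)

lemma rff_inner_int (A C : ℝ) : ∫ b in (0:ℝ)..(2*π), 2 * Real.cos (A + b) * Real.cos (C + b)
    = 2*π * Real.cos (A - C) := by
  simp only [rff_cos_prod_id]
  rw [intervalIntegral.integral_add intervalIntegrable_const]
  · rw [intervalIntegral.integral_const,
      intervalIntegral.integral_comp_add_mul Real.cos two_ne_zero (A+C), integral_cos]
    simp [mul_comm]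
    ring_nf
    rw [show A + C + π*4 = (A+C+2*π) + 2*π by ring, Real.sin_add_two_pi, Real.sin_add_two_pi]
    ring
  · exact (Real.continuous_cos.comp (by continuity)).intervalIntegrable _ _

lemma rff_int_uniform (A C : ℝ) :
    ∫ b, 2 * Real.cos (A + b) * Real.cos (C + b)
      ∂((ENNReal.ofReal (2 * Real.pi))⁻¹ • volume.restrict (Set.Icc 0 (2 * Real.pi)))
    = Real.cos (A - C) := by
  rw [integral_smul_measure, MeasureTheory.integral_Icc_eq_integral_Ioc,
    ← intervalIntegral.integral_of_le (by positivity), rff_inner_int]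
  rw [ENNReal.toReal_inv, ENNReal.toReal_ofReal (by positivity)]
  have h2π : (2*π) ≠ 0 := by positivity
  field_simp
  rw [smul_eq_mul, one_div, ← mul_assoc, inv_mul_cancel₀ h2π, one_mul]

/-- Single-feature unbiasedness: if `K z = ∫ cos ⟪w, z⟫ dμ(w)` for a probability
measure `μ` on `ℝ^d`, and `(w, b)` is distributed according to the product of `μ`
and the uniform distribution on `[0, 2π]`, then for all `x, y`,
`E[2 cos(⟪w,x⟫+b) cos(⟪w,y⟫+b)] = K (x - y)`. -/
theorem rff_single_feature_unbiased (d : ℕ)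
    (μ : Measure (EuclideanSpace ℝ (Fin d))) [IsProbabilityMeasure μ]
    (K : EuclideanSpace ℝ (Fin d) → ℝ)
    (hK : ∀ z, K z = ∫ w, Real.cos ⟪w, z⟫ ∂μ)
    (x y : EuclideanSpace ℝ (Fin d)) :
    ∫ p, 2 * Real.cos (⟪p.1, x⟫ + p.2) * Real.cos (⟪p.1, y⟫ + p.2)
        ∂(μ.prod ((ENNReal.ofReal (2 * Real.pi))⁻¹ •
            volume.restrict (Set.Icc 0 (2 * Real.pi)))) =
      K (x - y) := by
  set ν : Measure ℝ := (ENNReal.ofReal (2 * Real.pi))⁻¹ •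
      volume.restrict (Set.Icc 0 (2 * Real.pi)) with hν
  haveI : IsProbabilityMeasure ν := by
    constructor
    rw [hν]
    simp [Real.volume_Icc]
    rw [ENNReal.inv_mul_cancel (by positivity) (ENNReal.mul_ne_top (by simp) ENNReal.ofReal_ne_top)]
  have hcont : Continuous fun p : EuclideanSpace ℝ (Fin d) × ℝ =>
      2 * Real.cos (⟪p.1, x⟫ + p.2) * Real.cos (⟪p.1, y⟫ + p.2) := by
    have h1 : Continuous fun p : EuclideanSpace ℝ (Fin d) × ℝ => ⟪p.1, x⟫ :=
      Continuous.inner continuous_fst continuous_const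
    have h2 : Continuous fun p : EuclideanSpace ℝ (Fin d) × ℝ => ⟪p.1, y⟫ :=
      Continuous.inner continuous_fst continuous_const
    exact (continuous_const.mul (Real.continuous_cos.comp (h1.add continuous_snd))).mul
      (Real.continuous_cos.comp (h2.add continuous_snd))
  have hint : Integrable (fun p : EuclideanSpace ℝ (Fin d) × ℝ =>
      2 * Real.cos (⟪p.1, x⟫ + p.2) * Real.cos (⟪p.1, y⟫ + p.2)) (μ.prod ν) := by
    apply (integrable_const (2:ℝ)).mono' hcont.aestronglyMeasurable
    filter_upwards with p
    have h1 := Real.abs_cos_le_one (⟪p.1, x⟫ + p.2)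
    have h2 := Real.abs_cos_le_one (⟪p.1, y⟫ + p.2)
    calc |2 * Real.cos (⟪p.1, x⟫ + p.2) * Real.cos (⟪p.1, y⟫ + p.2)|
        = 2 * |Real.cos (⟪p.1, x⟫ + p.2)| * |Real.cos (⟪p.1, y⟫ + p.2)| := by
          rw [abs_mul, abs_mul]; simp
      _ ≤ 2 * 1 * 1 := by
          apply mul_le_mul _ h2 (abs_nonneg _) (by positivity)
          apply mul_le_mul_of_nonneg_left h1 (by norm_num)
      _ = 2 := by norm_num
  rw [MeasureTheory.integral_prod _ hint]
  have : ∀ w : EuclideanSpace ℝ (Fin d),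
      (∫ b, 2 * Real.cos (⟪w, x⟫ + b) * Real.cos (⟪w, y⟫ + b) ∂ν)
        = Real.cos ⟪w, x - y⟫ := by
    intro w
    rw [hν, rff_int_uniform, inner_sub_right]
  simp only [this, hK]
end

section
/- Unbiasedness of the random Fourier feature estimator (first claim of Lemma 1): let μ be a probability measure on ℝ^d and K : ℝ^d → ℝ with K(z) = ∫ cos(w·z) dμ(w) for all z. Let D ≥ 1, and let (w₁, b₁), …, (w_D, b_D) be i.i.d. with each (w_j, b_j) distributed according to the product of μ and the uniform distribution on [0, 2π]. Define φ(x) = √(2/D)·(cos(w₁·x + b₁), …, cos(w_D·x + b_D)) ∈ ℝ^D. Then for all x, y ∈ ℝ^d, E[φ(x)·φ(y)] = K(x − y), where φ(x)·φ(y) is the Euclidean inner product in ℝ^D. -/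
open Real RealInnerProductSpace MeasureTheory

lemma my_cos_mul_cos (a b : ℝ) :
    Real.cos a * Real.cos b = (Real.cos (a - b) + Real.cos (a + b)) / 2 := by
  rw [Real.cos_sub, Real.cos_add]; ring

lemma my_interval (θ : ℝ) : ∫ b in (0:ℝ)..(2 * π), Real.cos (θ + 2 * b) = 0 := by
  have h := intervalIntegral.integral_comp_mul_add Real.cos (two_ne_zero (α := ℝ)) θ
    (a := 0) (b := 2 * π)
  simp only [mul_zero, zero_add] at h
  have : ∀ b : ℝ, Real.cos (θ + 2 * b) = Real.cos (2 * b + θ) := fun b => by ring_nf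
  rw [intervalIntegral.integral_congr (fun b _ => this b), h, integral_cos]
  have : 2 * (2 * π) + θ = (θ + 2 * π) + 2 * π := by ring
  rw [this, Real.sin_add_two_pi, Real.sin_add_two_pi]
  simp

lemma my_pi_map_eval {ι : Type*} [Fintype ι] {α : ι → Type*} [∀ i, MeasurableSpace (α i)]
    (P : ∀ i, Measure (α i)) [∀ i, IsProbabilityMeasure (P i)] [∀ i, SigmaFinite (P i)] (j : ι) :
    (Measure.pi P).map (Function.eval j) = P j := by
  classical
  ext s hs
  rw [Measure.map_apply (measurable_pi_apply j) hs, Set.eval_preimage, Measure.pi_pi]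
  rw [Finset.prod_eq_single j (fun i _ hij => by simp [Function.update_of_ne hij]) (by simp)]
  simp

noncomputable def myν : Measure ℝ :=
  (ENNReal.ofReal (2 * Real.pi))⁻¹ • volume.restrict (Set.Icc 0 (2 * Real.pi))

lemma myν_prob : IsProbabilityMeasure myν := by
  constructor
  rw [myν, Measure.smul_apply, Measure.restrict_apply MeasurableSet.univ, Set.univ_inter,
    Real.volume_Icc, smul_eq_mul, sub_zero]
  rw [ENNReal.inv_mul_cancel (by positivity) ENNReal.ofReal_ne_top]

lemma myν_cos (θ : ℝ) : ∫ b, Real.cos (θ + 2 * b) ∂myν = 0 := by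
  rw [myν, integral_smul_measure]
  have h1 : ∫ b in Set.Icc (0:ℝ) (2 * π), Real.cos (θ + 2 * b) = 0 := by
    rw [integral_Icc_eq_integral_Ioc,
      ← intervalIntegral.integral_of_le (by positivity : (0:ℝ) ≤ 2 * π)]
    exact my_interval θ
  rw [h1]; simp

lemma my_bdd_int {α : Type*} [MeasurableSpace α] [TopologicalSpace α] [OpensMeasurableSpace α]
    {m : Measure α} [IsFiniteMeasure m]
    {f : α → ℝ} {C : ℝ} (hf : Continuous f) (hb : ∀ x, |f x| ≤ C) : Integrable f m :=
  Integrable.mono' (integrable_const C) hf.aestronglyMeasurable (Filter.Eventually.of_forall hb)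

attribute [local instance] myν_prob

lemma my_single (d : ℕ) (μ : Measure (EuclideanSpace ℝ (Fin d))) [IsProbabilityMeasure μ]
    (x y : EuclideanSpace ℝ (Fin d)) (c : ℝ) (hc : 0 ≤ c) :
    ∫ p : EuclideanSpace ℝ (Fin d) × ℝ,
      (Real.sqrt c * Real.cos (⟪p.1, x⟫ + p.2)) * (Real.sqrt c * Real.cos (⟪p.1, y⟫ + p.2))
      ∂(μ.prod myν) = (c / 2) * ∫ w, Real.cos ⟪w, x - y⟫ ∂μ := by
  have hcx : Continuous fun w : EuclideanSpace ℝ (Fin d) => (⟪w, x⟫ : ℝ) :=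
    Continuous.inner continuous_id continuous_const
  have hcy : Continuous fun w : EuclideanSpace ℝ (Fin d) => (⟪w, y⟫ : ℝ) :=
    Continuous.inner continuous_id continuous_const
  have hgc : Continuous fun p : EuclideanSpace ℝ (Fin d) × ℝ =>
      (Real.sqrt c * Real.cos (⟪p.1, x⟫ + p.2)) * (Real.sqrt c * Real.cos (⟪p.1, y⟫ + p.2)) := by
    fun_prop
  have hbnd : ∀ p : EuclideanSpace ℝ (Fin d) × ℝ,
      |(Real.sqrt c * Real.cos (⟪p.1, x⟫ + p.2)) * (Real.sqrt c * Real.cos (⟪p.1, y⟫ + p.2))| ≤ c := by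
    intro p
    have key : ∀ t : ℝ, |Real.sqrt c * Real.cos t| ≤ Real.sqrt c := fun t => by
      rw [abs_mul, abs_of_nonneg (Real.sqrt_nonneg c)]
      exact mul_le_of_le_one_right (Real.sqrt_nonneg c) (Real.abs_cos_le_one t)
    calc |(Real.sqrt c * Real.cos (⟪p.1, x⟫ + p.2)) * (Real.sqrt c * Real.cos (⟪p.1, y⟫ + p.2))|
        = |Real.sqrt c * Real.cos (⟪p.1, x⟫ + p.2)| * |Real.sqrt c * Real.cos (⟪p.1, y⟫ + p.2)| :=
          abs_mul _ _
      _ ≤ Real.sqrt c * Real.sqrt c :=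
          mul_le_mul (key _) (key _) (abs_nonneg _) (Real.sqrt_nonneg c)
      _ = c := Real.mul_self_sqrt hc
  have hint : Integrable (fun p : EuclideanSpace ℝ (Fin d) × ℝ =>
      (Real.sqrt c * Real.cos (⟪p.1, x⟫ + p.2)) * (Real.sqrt c * Real.cos (⟪p.1, y⟫ + p.2)))
      (μ.prod myν) := my_bdd_int hgc hbnd
  rw [MeasureTheory.integral_prod _ hint]
  have hinner : ∀ w : EuclideanSpace ℝ (Fin d),
      (∫ b, (Real.sqrt c * Real.cos (⟪w, x⟫ + b)) * (Real.sqrt c * Real.cos (⟪w, y⟫ + b)) ∂myν)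
        = (c / 2) * Real.cos ⟪w, x - y⟫ := by
    intro w
    have hpt : ∀ b : ℝ,
        (Real.sqrt c * Real.cos (⟪w, x⟫ + b)) * (Real.sqrt c * Real.cos (⟪w, y⟫ + b))
          = (c / 2) * Real.cos ⟪w, x - y⟫ + (c / 2) * Real.cos ((⟪w, x⟫ + ⟪w, y⟫) + 2 * b) := by
      intro b
      rw [show (Real.sqrt c * Real.cos (⟪w, x⟫ + b)) * (Real.sqrt c * Real.cos (⟪w, y⟫ + b))
          = (Real.sqrt c * Real.sqrt c) * (Real.cos (⟪w, x⟫ + b) * Real.cos (⟪w, y⟫ + b)) from by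
          ring, Real.mul_self_sqrt hc, my_cos_mul_cos]
      have h2 : (⟪w, x⟫ + b) - (⟪w, y⟫ + b) = ⟪w, x - y⟫ := by
        rw [inner_sub_right]; ring
      have h3 : (⟪w, x⟫ + b) + (⟪w, y⟫ + b) = (⟪w, x⟫ + ⟪w, y⟫) + 2 * b := by ring
      rw [h2, h3]; ring
    rw [integral_congr_ae (Filter.Eventually.of_forall hpt), integral_add]
    · rw [integral_const, probReal_univ, integral_const_mul, myν_cos]
      simp
    · exact integrable_const _
    · exact Integrable.const_mul (my_bdd_int (by fun_prop) (fun b => Real.abs_cos_le_one _)) _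
  rw [integral_congr_ae (Filter.Eventually.of_forall hinner), integral_const_mul]

/-- Unbiasedness of the random Fourier feature estimator (first claim of
Lemma 1): with `K z = ∫ cos ⟪w, z⟫ dμ(w)` for a probability measure `μ` on
`ℝ^d`, and `(w_j, b_j)`, `j = 1, …, D`, i.i.d. from `μ ⊗ Uniform[0, 2π]`, the
feature map `φ(x) = √(2/D) (cos(⟪w_j, x⟫ + b_j))_j` satisfies
`E[φ(x)·φ(y)] = K (x - y)`. -/
theorem rff_estimator_unbiased (d : ℕ)
    (μ : Measure (EuclideanSpace ℝ (Fin d))) [IsProbabilityMeasure μ]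
    (K : EuclideanSpace ℝ (Fin d) → ℝ)
    (hK : ∀ z, K z = ∫ w, Real.cos ⟪w, z⟫ ∂μ)
    (D : ℕ) (hD : 1 ≤ D)
    (x y : EuclideanSpace ℝ (Fin d)) :
    ∫ ω, (∑ j : Fin D,
        (Real.sqrt (2 / D) * Real.cos (⟪(ω j).1, x⟫ + (ω j).2)) *
        (Real.sqrt (2 / D) * Real.cos (⟪(ω j).1, y⟫ + (ω j).2)))
      ∂(Measure.pi fun _ : Fin D =>
          μ.prod ((ENNReal.ofReal (2 * Real.pi))⁻¹ •
            volume.restrict (Set.Icc 0 (2 * Real.pi)))) =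
      K (x - y) := by
  have hc : (0:ℝ) ≤ 2 / D := by positivity
  set g : EuclideanSpace ℝ (Fin d) × ℝ → ℝ := fun p =>
    (Real.sqrt (2 / D) * Real.cos (⟪p.1, x⟫ + p.2)) *
    (Real.sqrt (2 / D) * Real.cos (⟪p.1, y⟫ + p.2)) with hg_def
  have hgc : Continuous g := by
    have : Continuous fun w : EuclideanSpace ℝ (Fin d) => (⟪w, x⟫ : ℝ) :=
      Continuous.inner continuous_id continuous_const
    have : Continuous fun w : EuclideanSpace ℝ (Fin d) => (⟪w, y⟫ : ℝ) :=
      Continuous.inner continuous_id continuous_const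
    fun_prop
  have hgb : ∀ p, |g p| ≤ 2 / D := by
    intro p
    have key : ∀ t : ℝ, |Real.sqrt (2 / D) * Real.cos t| ≤ Real.sqrt (2 / D) := fun t => by
      rw [abs_mul, abs_of_nonneg (Real.sqrt_nonneg _)]
      exact mul_le_of_le_one_right (Real.sqrt_nonneg _) (Real.abs_cos_le_one t)
    calc |g p| = |Real.sqrt (2 / D) * Real.cos (⟪p.1, x⟫ + p.2)| *
          |Real.sqrt (2 / D) * Real.cos (⟪p.1, y⟫ + p.2)| := abs_mul _ _
      _ ≤ Real.sqrt (2 / D) * Real.sqrt (2 / D) :=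
          mul_le_mul (key _) (key _) (abs_nonneg _) (Real.sqrt_nonneg _)
      _ = 2 / D := Real.mul_self_sqrt hc
  have hP : (μ.prod ((ENNReal.ofReal (2 * Real.pi))⁻¹ •
      volume.restrict (Set.Icc 0 (2 * Real.pi)))) = μ.prod myν := rfl
  haveI : IsProbabilityMeasure (μ.prod myν) := by infer_instance
  rw [hP]
  have hint : ∀ j : Fin D, Integrable (fun ω : Fin D → EuclideanSpace ℝ (Fin d) × ℝ => g (ω j))
      (Measure.pi fun _ : Fin D => μ.prod myν) := by
    intro j
    refine Integrable.mono' (integrable_const ((2:ℝ) / D))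
      ((hgc.measurable.comp (measurable_pi_apply j)).aestronglyMeasurable)
      (Filter.Eventually.of_forall fun ω => hgb _)
  have hsum : ∫ ω, (∑ j : Fin D, g (ω j)) ∂(Measure.pi fun _ : Fin D => μ.prod myν)
      = ∑ j : Fin D, ∫ ω, g (ω j) ∂(Measure.pi fun _ : Fin D => μ.prod myν) :=
    integral_finset_sum _ fun j _ => hint j
  rw [show (fun ω : Fin D → EuclideanSpace ℝ (Fin d) × ℝ => ∑ j : Fin D,
      (Real.sqrt (2 / D) * Real.cos (⟪(ω j).1, x⟫ + (ω j).2)) *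
      (Real.sqrt (2 / D) * Real.cos (⟪(ω j).1, y⟫ + (ω j).2)))
      = fun ω => ∑ j : Fin D, g (ω j) from rfl] at *
  rw [hsum]
  have heval : ∀ j : Fin D, ∫ ω, g (ω j) ∂(Measure.pi fun _ : Fin D => μ.prod myν)
      = ∫ p, g p ∂(μ.prod myν) := by
    intro j
    have hmeas : AEStronglyMeasurable g
        ((Measure.pi fun _ : Fin D => μ.prod myν).map (Function.eval j)) := by
      rw [my_pi_map_eval (fun _ : Fin D => μ.prod myν) j]
      exact hgc.aestronglyMeasurable
    have h := integral_map (μ := Measure.pi fun _ : Fin D => μ.prod myν)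
      (φ := Function.eval j) (measurable_pi_apply j).aemeasurable (f := g) hmeas
    rw [my_pi_map_eval (fun _ : Fin D => μ.prod myν) j] at h
    exact h.symm
  have hone : ∀ j : Fin D, ∫ ω, g (ω j) ∂(Measure.pi fun _ : Fin D => μ.prod myν)
      = ((2 / D) / 2) * K (x - y) := by
    intro j
    rw [heval j, hg_def, my_single d μ x y (2 / D) hc, hK]
  rw [Finset.sum_congr rfl fun j _ => hone j, Finset.sum_const, Finset.card_univ,
    Fintype.card_fin, nsmul_eq_mul]
  have hD0 : (D:ℝ) ≠ 0 := by positivity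
  field_simp
end
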